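/- Let X be a semi-inner-product space and Z ⊆ X a linear subspace. Define the quotient seminorm on X/Z by ‖π(x)‖ = inf_{z∈Z} ‖x+z‖, where π : X → X/Z is the quotient map. Then this quotient seminorm satisfies the parallelogram identity: ‖u+v‖² + ‖u−v‖² = 2‖u‖² + 2‖v‖² for all u, v ∈ X/Z; consequently it arises from a semi-inner-product on X/Z. -/

import Mathlib

/-- The quotient seminorm `‖π(x)‖ = inf_{z ∈ Z} ‖x + z‖` on `X/Z`, where the
seminorm of `X` comes from a semi-inner-product (equivalently, satisfies the
parallelogram identity), itself satisfies the parallelogram identity;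
consequently it arises from a semi-inner-product on `X/Z`. -/
theorem quotient_seminorm_parallelogram {X : Type*} [SeminormedAddCommGroup X]
    [NormedSpace ℂ X]
    (hpar : ∀ x y : X, ‖x + y‖ ^ 2 + ‖x - y‖ ^ 2 = 2 * ‖x‖ ^ 2 + 2 * ‖y‖ ^ 2)
    (Z : Submodule ℂ X)
    (q : X → ℝ) (hq : ∀ x : X, q x = ⨅ z : Z, ‖x + (z : X)‖) :
    (∀ x y : X, q (x + y) ^ 2 + q (x - y) ^ 2 = 2 * q x ^ 2 + 2 * q y ^ 2) ∧
    ∃ Bq : (X ⧸ Z) → (X ⧸ Z) → ℂ,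
      (∀ u v w : X ⧸ Z, Bq (u + v) w = Bq u w + Bq v w) ∧
      (∀ (c : ℂ) (u v : X ⧸ Z), Bq (c • u) v = c * Bq u v) ∧
      (∀ u v : X ⧸ Z, Bq v u = (starRingEnd ℂ) (Bq u v)) ∧
      (∀ x : X, Bq (Submodule.Quotient.mk x) (Submodule.Quotient.mk x)
          = ((q x ^ 2 : ℝ) : ℂ)) := by
  -- `q x` is the quotient norm of `mk x`
  have hqn : ∀ x : X, q x = ‖(Submodule.Quotient.mk x : X ⧸ Z)‖ := by
    intro x
    rw [hq]
    have : (Submodule.Quotient.mk x : X ⧸ Z) = QuotientAddGroup.mk' Z.toAddSubgroup x := rfl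
    have h := quotient_norm_mk_eq Z.toAddSubgroup x
    rw [sInf_image'] at h
    exact h.symm
  -- the quotient norm satisfies the parallelogram inequality
  have key : ∀ u v : X ⧸ Z, ‖u + v‖ ^ 2 + ‖u - v‖ ^ 2 ≤ 2 * ‖u‖ ^ 2 + 2 * ‖v‖ ^ 2 := by
    intro u v
    have h : ∀ ε : ℝ, ε ∈ Set.Ioi (0 : ℝ) →
        ‖u + v‖ ^ 2 + ‖u - v‖ ^ 2 ≤ 2 * (‖u‖ + ε) ^ 2 + 2 * (‖v‖ + ε) ^ 2 := by
      intro ε hε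
      obtain ⟨x, rfl, hx⟩ := Submodule.Quotient.norm_mk_lt u hε
      obtain ⟨y, rfl, hy⟩ := Submodule.Quotient.norm_mk_lt v hε
      have h1 : ‖(Submodule.Quotient.mk x + Submodule.Quotient.mk y : X ⧸ Z)‖ ≤ ‖x + y‖ := by
        rw [← Submodule.Quotient.mk_add]; exact Submodule.Quotient.norm_mk_le _ _
      have h2 : ‖(Submodule.Quotient.mk x - Submodule.Quotient.mk y : X ⧸ Z)‖ ≤ ‖x - y‖ := by
        rw [← Submodule.Quotient.mk_sub]; exact Submodule.Quotient.norm_mk_le _ _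
      have hp := hpar x y
      have n1 := norm_nonneg (Submodule.Quotient.mk x + Submodule.Quotient.mk y : X ⧸ Z)
      have n2 := norm_nonneg (Submodule.Quotient.mk x - Submodule.Quotient.mk y : X ⧸ Z)
      have n3 := norm_nonneg x
      have n4 := norm_nonneg y
      nlinarith [sq_nonneg (‖x + y‖ - ‖(Submodule.Quotient.mk x + Submodule.Quotient.mk y : X ⧸ Z)‖)]
    have tend : Filter.Tendsto (fun ε : ℝ => 2 * (‖u‖ + ε) ^ 2 + 2 * (‖v‖ + ε) ^ 2)
        (nhdsWithin 0 (Set.Ioi 0)) (nhds (2 * ‖u‖ ^ 2 + 2 * ‖v‖ ^ 2)) := by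
      have hc : Continuous fun ε : ℝ => 2 * (‖u‖ + ε) ^ 2 + 2 * (‖v‖ + ε) ^ 2 := by continuity
      have := hc.tendsto 0
      simp only [add_zero] at this
      exact this.mono_left nhdsWithin_le_nhds
    exact ge_of_tendsto tend (Filter.eventually_iff_exists_mem.2
      ⟨Set.Ioi 0, self_mem_nhdsWithin, h⟩)
  -- hence equality
  have qpar : ∀ u v : X ⧸ Z, ‖u + v‖ ^ 2 + ‖u - v‖ ^ 2 = 2 * ‖u‖ ^ 2 + 2 * ‖v‖ ^ 2 := by
    intro u v
    refine le_antisymm (key u v) ?_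
    have h2 := key (u + v) (u - v)
    have e1 : (u + v) + (u - v) = (2 : ℂ) • u := by
      rw [two_smul]; abel
    have e2 : (u + v) - (u - v) = (2 : ℂ) • v := by
      rw [two_smul]; abel
    have hn2 : ‖(2 : ℂ)‖ = 2 := by simp
    rw [e1, e2, norm_smul, norm_smul, hn2] at h2
    nlinarith [h2]
  constructor
  · intro x y
    have := qpar (Submodule.Quotient.mk x) (Submodule.Quotient.mk y)
    rw [← Submodule.Quotient.mk_add, ← Submodule.Quotient.mk_sub] at this
    rw [hqn (x + y), hqn (x - y), hqn x, hqn y]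
    exact this
  · haveI : InnerProductSpaceable (SeparationQuotient (X ⧸ Z)) := by
      constructor
      intro a b
      obtain ⟨u, rfl⟩ := SeparationQuotient.surjective_mk a
      obtain ⟨v, rfl⟩ := SeparationQuotient.surjective_mk b
      rw [← SeparationQuotient.mk_add, ← SeparationQuotient.mk_sub]
      simp only [SeparationQuotient.norm_mk]
      have := qpar u v
      nlinarith [this]
    letI inst : InnerProductSpace ℂ (SeparationQuotient (X ⧸ Z)) :=
      InnerProductSpace.ofNorm ℂ (InnerProductSpaceable.parallelogram_identity)
    refine ⟨fun u v => inner ℂ (SeparationQuotient.mk v) (SeparationQuotient.mk u), ?_, ?_, ?_, ?_⟩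
    · intro u v w
      show (inner ℂ (SeparationQuotient.mk w) (SeparationQuotient.mk (u + v)) : ℂ) = inner ℂ (SeparationQuotient.mk w) (SeparationQuotient.mk u) + inner ℂ (SeparationQuotient.mk w) (SeparationQuotient.mk v)
      rw [SeparationQuotient.mk_add, inner_add_right]
    · intro c u v
      show (inner ℂ (SeparationQuotient.mk v) (SeparationQuotient.mk (c • u)) : ℂ) = c * inner ℂ (SeparationQuotient.mk v) (SeparationQuotient.mk u)
      rw [SeparationQuotient.mk_smul]
      have h := inner_smul_right (𝕜 := ℂ) (E := SeparationQuotient (X ⧸ Z)) (SeparationQuotient.mk v) (SeparationQuotient.mk u) c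
      with_unfolding_all exact h
    · intro u v
      exact (inner_conj_symm (𝕜 := ℂ) (E := SeparationQuotient (X ⧸ Z)) _ _).symm
    · intro x
      show (inner ℂ (SeparationQuotient.mk (Submodule.Quotient.mk x)) (SeparationQuotient.mk (Submodule.Quotient.mk x)) : ℂ) = _
      rw [inner_self_eq_norm_sq_to_K (𝕜 := ℂ) (E := SeparationQuotient (X ⧸ Z)), SeparationQuotient.norm_mk, ← hqn]
      push_cast
      rfl
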